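/- (Diagonalization step in the Mallard's-law construction.) Let U ∈ ℝ^{3×3} be symmetric positive definite with det U = Δ, let R = diag(1, −1, −1) (the 180° rotation about e₁), and suppose Q ∈ SO(3) and a ∈ ℝ³ satisfy Q U R = U + a ⊗ e₁. Set F = U + (1/2) a ⊗ e₁ and C = Fᵀ F. Then: (i) C₁₂ = C₁₃ = 0; (ii) C_{ij} = (U²)_{ij} for all i, j ∈ {2, 3}; (iii) det F = Δ; and (iv) C₁₁ = Δ² / (cof U²)₁₁, where (cof U²)₁₁ = (U²)₂₂(U²)₃₃ − (U²)₂₃(U²)₃₂ > 0. -/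

import Mathlib

open Metric Set MeasureTheory
open scoped RealInnerProductSpace NNReal Matrix

noncomputable section

/-- `ℝ^d` with the Euclidean structure. -/
abbrev Euc (d : ℕ) := EuclideanSpace ℝ (Fin d)

/-- The Frobenius norm of a matrix. -/
def frobNorm {d : ℕ} (M : Matrix (Fin d) (Fin d) ℝ) : ℝ :=
  Real.sqrt (∑ i, ∑ j, (M i j) ^ 2)

/-- The rank-one matrix `a ⊗ n` with entries `aᵢ nⱼ`. -/
def outer {d : ℕ} (a n : Euc d) : Matrix (Fin d) (Fin d) ℝ :=
  Matrix.of fun i j => a i * n j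

/-- The Jacobian matrix of `y` at `x`, with entries `∂yᵢ/∂xⱼ`. -/
def jacobian {d : ℕ} (y : Euc d → Euc d) (x : Euc d) : Matrix (Fin d) (Fin d) ℝ :=
  Matrix.of fun i j => fderiv ℝ y x (EuclideanSpace.single j 1) i


/-- `F = U + (1/2) a ⊗ e₁`, the midpoint of the Mallard's-law segment. -/
def F10 (U : Matrix (Fin 3) (Fin 3) ℝ) (a : Euc 3) : Matrix (Fin 3) (Fin 3) ℝ :=
  U + (2⁻¹ : ℝ) • outer a (EuclideanSpace.single 0 1)

/-- `C = Fᵀ F`. -/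
def C10 (U : Matrix (Fin 3) (Fin 3) ℝ) (a : Euc 3) : Matrix (Fin 3) (Fin 3) ℝ :=
  (F10 U a)ᵀ * F10 U a

/-- diagonalization step in the Mallard's-law construction. Let `U` be
symmetric positive definite with `det U = Δ`, let `R = diag(1,-1,-1)`, and suppose
`Q ∈ SO(3)` and `a ∈ ℝ³` satisfy `Q U R = U + a ⊗ e₁`. With `F = U + (1/2) a ⊗ e₁` and
`C = Fᵀ F`: (i) `C₁₂ = C₁₃ = 0`; (ii) `C_{ij} = (U²)_{ij}` for `i, j ∈ {2,3}`;
(iii) `det F = Δ`; and (iv) `C₁₁ = Δ²/(cof U²)₁₁` with `(cof U²)₁₁ > 0`. -/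
theorem statement10 (Δ : ℝ) (U : Matrix (Fin 3) (Fin 3) ℝ)
    (hU : U.PosDef) (hdet : U.det = Δ)
    (Q : Matrix (Fin 3) (Fin 3) ℝ) (hQ : Qᵀ * Q = 1) (hQdet : Q.det = 1)
    (a : Euc 3)
    (hmallard : Q * U * Matrix.diagonal ![1, -1, -1]
      = U + outer a (EuclideanSpace.single 0 1)) :
    C10 U a 0 1 = 0 ∧ C10 U a 0 2 = 0 ∧
    (∀ i j : Fin 3, i ≠ 0 → j ≠ 0 → C10 U a i j = (U * U) i j) ∧
    (F10 U a).det = Δ ∧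
    0 < (U * U) 1 1 * (U * U) 2 2 - (U * U) 1 2 * (U * U) 2 1 ∧
    C10 U a 0 0 = Δ ^ 2 / ((U * U) 1 1 * (U * U) 2 2 - (U * U) 1 2 * (U * U) 2 1) := by
  have hsymm : Uᵀ = U := by
    simpa [Matrix.IsHermitian, Matrix.conjTranspose_eq_transpose_of_trivial] using hU.1
  have hs01 : U 1 0 = U 0 1 := congrFun (congrFun hsymm 0) 1
  have hs02 : U 2 0 = U 0 2 := congrFun (congrFun hsymm 0) 2
  have hs12 : U 2 1 = U 1 2 := congrFun (congrFun hsymm 1) 2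
  have hkey : (U + outer a (EuclideanSpace.single 0 1))ᵀ * (U + outer a (EuclideanSpace.single 0 1))
      = (Matrix.diagonal ![1, -1, -1])ᵀ * (Uᵀ * (U * Matrix.diagonal ![1, -1, -1])) := by
    rw [← hmallard]
    simp only [Matrix.transpose_mul, Matrix.mul_assoc]
    rw [← Matrix.mul_assoc Qᵀ Q, hQ, Matrix.one_mul]
  have h01 := congrFun (congrFun hkey 0) 1
  have h02 := congrFun (congrFun hkey 0) 2
  simp [Matrix.mul_apply, Fin.sum_univ_three, outer, EuclideanSpace.single_apply] at h01 h02
  have c01 : C10 U a 0 1 = 0 := by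
    simp [C10, F10, Matrix.mul_apply, Fin.sum_univ_three, outer, EuclideanSpace.single_apply,
      Matrix.add_apply, Matrix.smul_apply]
    linear_combination h01 / 2
  have c02 : C10 U a 0 2 = 0 := by
    simp [C10, F10, Matrix.mul_apply, Fin.sum_univ_three, outer, EuclideanSpace.single_apply,
      Matrix.add_apply, Matrix.smul_apply]
    linear_combination h02 / 2
  have cblock : ∀ i j : Fin 3, i ≠ 0 → j ≠ 0 → C10 U a i j = (U * U) i j := by
    intro i j hi hj
    fin_cases i <;> fin_cases j <;>
      first
      | exact absurd rfl hi
      | exact absurd rfl hj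
      | (simp [C10, F10, Matrix.mul_apply, Fin.sum_univ_three, outer,
           EuclideanSpace.single_apply, Matrix.add_apply, Matrix.smul_apply]
         simp only [hs01, hs02, hs12]
         try ring)
  have hdet1 : (U + outer a (EuclideanSpace.single 0 1)).det = Δ := by
    rw [← hmallard, Matrix.det_mul, Matrix.det_mul, hQdet, hdet, Matrix.det_diagonal]
    simp [Fin.prod_univ_three]
  have hdF : (F10 U a).det = Δ := by
    have h2 : (2:ℝ) * (F10 U a).det
        = U.det + (U + outer a (EuclideanSpace.single 0 1)).det := by
      simp [F10, Matrix.det_fin_three, outer, EuclideanSpace.single_apply,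
        Matrix.add_apply, Matrix.smul_apply]
      ring
    rw [hdet, hdet1] at h2; linarith
  have hdC : (C10 U a).det = Δ ^ 2 := by
    rw [C10, Matrix.det_mul, Matrix.det_transpose, hdF]; ring
  have hexp : (C10 U a).det
      = C10 U a 0 0 * ((U * U) 1 1 * (U * U) 2 2 - (U * U) 1 2 * (U * U) 2 1) := by
    rw [Matrix.det_fin_three, c01, c02, cblock 1 1 (by decide) (by decide),
      cblock 2 2 (by decide) (by decide), cblock 1 2 (by decide) (by decide),
      cblock 2 1 (by decide) (by decide)]
    ring
  have hC00 : C10 U a 0 0 = F10 U a 0 0 ^ 2 + F10 U a 1 0 ^ 2 + F10 U a 2 0 ^ 2 := by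
    simp [C10, Matrix.mul_apply, Fin.sum_univ_three]; ring
  have hC00nonneg : 0 ≤ C10 U a 0 0 := by rw [hC00]; positivity
  have hΔpos : 0 < Δ := hdet ▸ hU.det_pos
  have hm : C10 U a 0 0 * ((U * U) 1 1 * (U * U) 2 2 - (U * U) 1 2 * (U * U) 2 1) = Δ ^ 2 := by
    rw [← hexp, hdC]
  have hC00ne : C10 U a 0 0 ≠ 0 := by
    intro h
    rw [h, zero_mul] at hm
    nlinarith
  have hC00pos : 0 < C10 U a 0 0 := lt_of_le_of_ne hC00nonneg (Ne.symm hC00ne)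
  have hmpos : 0 < (U * U) 1 1 * (U * U) 2 2 - (U * U) 1 2 * (U * U) 2 1 := by nlinarith
  refine ⟨c01, c02, cblock, hdF, hmpos, ?_⟩
  field_simp
  linarith [hm]


end
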